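/- If Φ satisfies Φ_{XY} - (1/2)(X-Y)^{-1}Φ_X + (1/2)(X-Y)^{-1}Φ_Y = 0 and a vector-valued function e satisfies the dual Euler equation e_{XY} + (1/2)(X-Y)^{-1}e_X - (1/2)(X-Y)^{-1}e_Y = 0 on an open subset of {X > Y}, then ∂/∂Y(Φ_X·e_X) = ∂/∂X(Φ_Y·e_Y); hence the ℝ³-valued 1-form -Φ_X·e_X dX - Φ_Y·e_Y dY is closed. -/

import Mathlib

open ContinuousLinearMap

variable {E : Type*} [NormedAddCommGroup E] [NormedSpace ℝ E]

/-- Partial derivative in the first variable, as `deriv`. -/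
lemma hderiv_fst {U : Set (ℝ × ℝ)} (hU : IsOpen U) {f : ℝ → ℝ → E}
    (hf : ContDiffOn ℝ 2 (fun p : ℝ × ℝ => f p.1 p.2) U) {p : ℝ × ℝ} (hp : p ∈ U) :
    HasDerivAt (fun X' => f X' p.2)
      (fderiv ℝ (fun q : ℝ × ℝ => f q.1 q.2) p ((1 : ℝ), (0 : ℝ))) p.1 := by
  have hd : DifferentiableAt ℝ (fun q : ℝ × ℝ => f q.1 q.2) p :=
    (hf.contDiffAt (hU.mem_nhds hp)).differentiableAt (by norm_num)
  have := hd.hasFDerivAt.comp_hasDerivAt p.1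
    ((hasDerivAt_id p.1).prodMk (hasDerivAt_const p.1 p.2))
  simpa [Function.comp_def] using this

lemma hderiv_snd {U : Set (ℝ × ℝ)} (hU : IsOpen U) {f : ℝ → ℝ → E}
    (hf : ContDiffOn ℝ 2 (fun p : ℝ × ℝ => f p.1 p.2) U) {p : ℝ × ℝ} (hp : p ∈ U) :
    HasDerivAt (fun Y' => f p.1 Y')
      (fderiv ℝ (fun q : ℝ × ℝ => f q.1 q.2) p ((0 : ℝ), (1 : ℝ))) p.2 := by
  have hd : DifferentiableAt ℝ (fun q : ℝ × ℝ => f q.1 q.2) p :=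
    (hf.contDiffAt (hU.mem_nhds hp)).differentiableAt (by norm_num)
  have := hd.hasFDerivAt.comp_hasDerivAt p.2
    ((hasDerivAt_const p.2 p.1).prodMk (hasDerivAt_id p.2))
  simpa [Function.comp_def] using this

lemma hderiv_XY {U : Set (ℝ × ℝ)} (hU : IsOpen U) {f : ℝ → ℝ → E}
    (hf : ContDiffOn ℝ 2 (fun p : ℝ × ℝ => f p.1 p.2) U) {X Y : ℝ} (h : (X, Y) ∈ U) :
    HasDerivAt (fun Y' => deriv (fun X' => f X' Y') X)
      ((fderiv ℝ (fderiv ℝ (fun q : ℝ × ℝ => f q.1 q.2)) (X, Y) ((0:ℝ), (1:ℝ)))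
        ((1:ℝ), (0:ℝ))) Y := by
  set F := fun q : ℝ × ℝ => f q.1 q.2 with hF
  have hg : ContDiffAt ℝ 1 (fderiv ℝ F) (X, Y) :=
    (hf.contDiffAt (hU.mem_nhds h)).fderiv_right (by norm_num)
  have hgd : DifferentiableAt ℝ (fderiv ℝ F) (X, Y) := hg.differentiableAt one_ne_zero
  have h1 : HasDerivAt (fun Y' => fderiv ℝ F (X, Y'))
      (fderiv ℝ (fderiv ℝ F) (X, Y) ((0:ℝ), (1:ℝ))) Y := by
    have := hgd.hasFDerivAt.comp_hasDerivAt Y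
      ((hasDerivAt_const Y X).prodMk (hasDerivAt_id Y))
    simpa [Function.comp_def] using this
  have h2 : HasDerivAt (fun Y' => fderiv ℝ F (X, Y') ((1:ℝ), (0:ℝ)))
      ((fderiv ℝ (fderiv ℝ F) (X, Y) ((0:ℝ), (1:ℝ))) ((1:ℝ), (0:ℝ))) Y := by
    have := (ContinuousLinearMap.apply ℝ E (((1:ℝ), (0:ℝ)) : ℝ × ℝ)).hasFDerivAt.comp_hasDerivAt
      Y h1
    simpa [Function.comp_def] using this
  refine h2.congr_of_eventuallyEq ?_
  have hev : ∀ᶠ Y' in nhds Y, (X, Y') ∈ U :=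
    (Continuous.prodMk continuous_const continuous_id).continuousAt.preimage_mem_nhds
      (hU.mem_nhds h)
  filter_upwards [hev] with Y' hY'
  simpa [hF] using (hderiv_fst hU hf hY').deriv

lemma hderiv_YX {U : Set (ℝ × ℝ)} (hU : IsOpen U) {f : ℝ → ℝ → E}
    (hf : ContDiffOn ℝ 2 (fun p : ℝ × ℝ => f p.1 p.2) U) {X Y : ℝ} (h : (X, Y) ∈ U) :
    HasDerivAt (fun X' => deriv (fun Y' => f X' Y') Y)
      ((fderiv ℝ (fderiv ℝ (fun q : ℝ × ℝ => f q.1 q.2)) (X, Y) ((1:ℝ), (0:ℝ)))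
        ((0:ℝ), (1:ℝ))) X := by
  set F := fun q : ℝ × ℝ => f q.1 q.2 with hF
  have hg : ContDiffAt ℝ 1 (fderiv ℝ F) (X, Y) :=
    (hf.contDiffAt (hU.mem_nhds h)).fderiv_right (by norm_num)
  have hgd : DifferentiableAt ℝ (fderiv ℝ F) (X, Y) := hg.differentiableAt one_ne_zero
  have h1 : HasDerivAt (fun X' => fderiv ℝ F (X', Y))
      (fderiv ℝ (fderiv ℝ F) (X, Y) ((1:ℝ), (0:ℝ))) X := by
    have := hgd.hasFDerivAt.comp_hasDerivAt X
      ((hasDerivAt_id X).prodMk (hasDerivAt_const X Y))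
    simpa [Function.comp_def] using this
  have h2 : HasDerivAt (fun X' => fderiv ℝ F (X', Y) ((0:ℝ), (1:ℝ)))
      ((fderiv ℝ (fderiv ℝ F) (X, Y) ((1:ℝ), (0:ℝ))) ((0:ℝ), (1:ℝ))) X := by
    have := (ContinuousLinearMap.apply ℝ E (((0:ℝ), (1:ℝ)) : ℝ × ℝ)).hasFDerivAt.comp_hasDerivAt
      X h1
    simpa [Function.comp_def] using this
  refine h2.congr_of_eventuallyEq ?_
  have hev : ∀ᶠ X' in nhds X, (X', Y) ∈ U :=
    (Continuous.prodMk continuous_id continuous_const).continuousAt.preimage_mem_nhds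
      (hU.mem_nhds h)
  filter_upwards [hev] with X' hX'
  simpa [hF] using (hderiv_snd hU hf hX').deriv

lemma snd_symm {U : Set (ℝ × ℝ)} (hU : IsOpen U) {f : ℝ → ℝ → E}
    (hf : ContDiffOn ℝ 2 (fun p : ℝ × ℝ => f p.1 p.2) U) {p : ℝ × ℝ} (hp : p ∈ U)
    (v w : ℝ × ℝ) :
    fderiv ℝ (fderiv ℝ (fun q : ℝ × ℝ => f q.1 q.2)) p v w
      = fderiv ℝ (fderiv ℝ (fun q : ℝ × ℝ => f q.1 q.2)) p w v := by
  set F := fun q : ℝ × ℝ => f q.1 q.2 with hF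
  have hg : ContDiffAt ℝ 1 (fderiv ℝ F) p :=
    (hf.contDiffAt (hU.mem_nhds hp)).fderiv_right (by norm_num)
  have hgd : HasFDerivAt (fderiv ℝ F) (fderiv ℝ (fderiv ℝ F) p) p :=
    (hg.differentiableAt one_ne_zero).hasFDerivAt
  have hev : ∀ᶠ y in nhds p, HasFDerivAt F (fderiv ℝ F y) y := by
    filter_upwards [hU.mem_nhds hp] with y hy
    exact (((hf.contDiffAt (hU.mem_nhds hy)).differentiableAt (by norm_num)).hasFDerivAt)
  exact second_derivative_symmetric_of_eventually hev hgd v w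

/-- If `Φ` satisfies the Euler equation `Φ_{XY} - (1/2)(X-Y)⁻¹Φ_X + (1/2)(X-Y)⁻¹Φ_Y = 0`
and the vector-valued `e` satisfies the dual Euler equation
`e_{XY} + (1/2)(X-Y)⁻¹e_X - (1/2)(X-Y)⁻¹e_Y = 0` on an open subset of `{X > Y}`,
then `∂/∂Y(Φ_X·e_X) = ∂/∂X(Φ_Y·e_Y)`. -/
theorem stmt_15 (U : Set (ℝ × ℝ)) (hUopen : IsOpen U)
    (hUsub : U ⊆ {p : ℝ × ℝ | p.2 < p.1})
    (Φ : ℝ → ℝ → ℝ) (e : ℝ → ℝ → (Fin 3 → ℝ))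
    (hΦC2 : ContDiffOn ℝ 2 (fun p : ℝ × ℝ => Φ p.1 p.2) U)
    (heC2 : ContDiffOn ℝ 2 (fun p : ℝ × ℝ => e p.1 p.2) U)
    (hEulerΦ : ∀ X Y : ℝ, (X, Y) ∈ U →
      deriv (fun Y' => deriv (fun X' => Φ X' Y') X) Y
        - ((1 : ℝ)/2) * (X - Y)⁻¹ * deriv (fun X' => Φ X' Y) X
        + ((1 : ℝ)/2) * (X - Y)⁻¹ * deriv (fun Y' => Φ X Y') Y = 0)
    (hEulere : ∀ X Y : ℝ, (X, Y) ∈ U →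
      deriv (fun Y' => deriv (fun X' => e X' Y') X) Y
        + (((1 : ℝ)/2) * (X - Y)⁻¹) • deriv (fun X' => e X' Y) X
        - (((1 : ℝ)/2) * (X - Y)⁻¹) • deriv (fun Y' => e X Y') Y = 0) :
    ∀ X Y : ℝ, (X, Y) ∈ U →
      deriv (fun Y' => (deriv (fun X' => Φ X' Y') X) • (deriv (fun X' => e X' Y') X)) Y
        = deriv (fun X' => (deriv (fun Y' => Φ X' Y') Y) • (deriv (fun Y' => e X' Y') Y)) X := by
  intro X Y h
  set c : ℝ := ((1 : ℝ)/2) * (X - Y)⁻¹ with hc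
  set ΦX : ℝ := fderiv ℝ (fun q : ℝ × ℝ => Φ q.1 q.2) (X, Y) ((1:ℝ), (0:ℝ)) with hΦX
  set ΦY : ℝ := fderiv ℝ (fun q : ℝ × ℝ => Φ q.1 q.2) (X, Y) ((0:ℝ), (1:ℝ)) with hΦY
  set eX : Fin 3 → ℝ := fderiv ℝ (fun q : ℝ × ℝ => e q.1 q.2) (X, Y) ((1:ℝ), (0:ℝ)) with heX
  set eY : Fin 3 → ℝ := fderiv ℝ (fun q : ℝ × ℝ => e q.1 q.2) (X, Y) ((0:ℝ), (1:ℝ)) with heY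
  set DΦ : ℝ := (fderiv ℝ (fderiv ℝ (fun q : ℝ × ℝ => Φ q.1 q.2)) (X, Y) ((0:ℝ),(1:ℝ)))
      ((1:ℝ),(0:ℝ)) with hDΦ
  set De : Fin 3 → ℝ := (fderiv ℝ (fderiv ℝ (fun q : ℝ × ℝ => e q.1 q.2)) (X, Y) ((0:ℝ),(1:ℝ)))
      ((1:ℝ),(0:ℝ)) with hDe
  -- relations from Euler equations
  have hEΦ : DΦ - c * ΦX + c * ΦY = 0 := by
    have := hEulerΦ X Y h
    rwa [(hderiv_XY hUopen hΦC2 h).deriv, (hderiv_fst hUopen hΦC2 h).deriv,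
      (hderiv_snd hUopen hΦC2 h).deriv] at this
  have hEe : De + c • eX - c • eY = 0 := by
    have := hEulere X Y h
    rwa [(hderiv_XY hUopen heC2 h).deriv, (hderiv_fst hUopen heC2 h).deriv,
      (hderiv_snd hUopen heC2 h).deriv] at this
  -- pointwise partial derivatives as deriv
  have dΦx : deriv (fun X' => Φ X' Y) X = ΦX := (hderiv_fst hUopen hΦC2 h).deriv
  have dΦy : deriv (fun Y' => Φ X Y') Y = ΦY := (hderiv_snd hUopen hΦC2 h).deriv
  have dex : deriv (fun X' => e X' Y) X = eX := (hderiv_fst hUopen heC2 h).deriv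
  have dey : deriv (fun Y' => e X Y') Y = eY := (hderiv_snd hUopen heC2 h).deriv
  -- left side derivative
  have hL := HasDerivAt.deriv ((hderiv_XY hUopen hΦC2 h).smul (hderiv_XY hUopen heC2 h))
  rw [dΦx, dex] at hL
  have hR := HasDerivAt.deriv ((hderiv_YX hUopen hΦC2 h).smul (hderiv_YX hUopen heC2 h))
  rw [dΦy, dey, snd_symm hUopen hΦC2 h ((1:ℝ),(0:ℝ)) ((0:ℝ),(1:ℝ)),
    snd_symm hUopen heC2 h ((1:ℝ),(0:ℝ)) ((0:ℝ),(1:ℝ))] at hR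
  erw [hL, hR]
  have h1 : DΦ = c * ΦX - c * ΦY := by linarith
  have h2 : De = c • eY - c • eX := by
    funext i; have := congrFun hEe i
    simp only [Pi.add_apply, Pi.sub_apply, Pi.smul_apply, Pi.zero_apply, smul_eq_mul] at this ⊢
    linarith
  rw [← hDΦ, ← hDe, h1, h2]
  module
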